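/- For any δ > 0 there exists c = c(δ) > 0 such that the following holds. For any ε ∈ (0,c), any simple graph G = (V,E) on n ≥ ε⁻² vertices with minimal degree at least δn, any U ⊆ V with |U| ≥ ε√n, and any vertex v of G, the simple random walk X on G started at v satisfies P_v(X[0, 2(t_mix^G(ε/2) + ⌊√n⌋)] ∩ U = ∅) ≤ 1 − εδ/4. -/

import Mathlib

open scoped Classical

noncomputable section

namespace Paper

variable {V : Type} [Fintype V]

/-- The degree of a vertex `v` in a simple graph `G`. -/
def deg (G : SimpleGraph V) (v : V) : ℕ := Nat.card {u | G.Adj v u}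

/-- The transition matrix of the simple random walk on `G`. -/
def transMat (G : SimpleGraph V) : Matrix V V ℝ :=
  fun v u => if G.Adj v u then (deg G v : ℝ)⁻¹ else 0

/-- The transition matrix `Q = (I + P)/2` of the lazy random walk on `G`. -/
def lazyMat [DecidableEq V] (G : SimpleGraph V) : Matrix V V ℝ :=
  (2 : ℝ)⁻¹ • ((1 : Matrix V V ℝ) + transMat G)

/-- Total variation distance between two measures on `V`. -/
def dTV (μ ν : V → ℝ) : ℝ := (∑ u, |μ u - ν u|) / 2

/-- The stationary distribution `π(v) = deg(v)/2|E|` of the random walk on `G`. -/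
def statDist (G : SimpleGraph V) (v : V) : ℝ := (deg G v : ℝ) / ∑ u, (deg G u : ℝ)

/-- The `ε`-mixing time of the lazy random walk on `G`. -/
def tmix [DecidableEq V] (G : SimpleGraph V) (ε : ℝ) : ℕ :=
  Finset.univ.sup fun v : V =>
    sInf {t : ℕ | dTV (fun u => (lazyMat G ^ t) v u) (statDist G) < ε}

/-- The transition matrix of the simple random walk on `G` killed on the set `U`. -/
def killedMat (G : SimpleGraph V) (U : Finset V) : Matrix V V ℝ :=
  fun u w => if u ∉ U ∧ w ∉ U then transMat G u w else 0

/-- `P_v(X[0,T] ∩ U = ∅)`: the probability that the simple random walk on `G` started at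
`v` avoids `U` during its first `T` steps (positions `X_0, …, X_T`). -/
def avoidProb (G : SimpleGraph V) (U : Finset V) (v : V) (T : ℕ) : ℝ :=
  if v ∈ U then 0 else ∑ u, (killedMat G U ^ T) v u


variable [DecidableEq V]


/-! ### Generic matrix lemmas -/

lemma pow_apply_nonneg {A : Matrix V V ℝ} (h : ∀ i j, 0 ≤ A i j) (t : ℕ) :
    ∀ i j, 0 ≤ (A ^ t) i j := by
  induction t with
  | zero =>
    intro i j; rw [pow_zero, Matrix.one_apply]
    split <;> norm_num
  | succ t ih =>
    intro i j; rw [pow_succ, Matrix.mul_apply]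
    exact Finset.sum_nonneg fun k _ => mul_nonneg (ih i k) (h k j)

lemma pow_apply_le_pow {A B : Matrix V V ℝ} (hA : ∀ i j, 0 ≤ A i j)
    (hAB : ∀ i j, A i j ≤ B i j) (t : ℕ) : ∀ i j, (A ^ t) i j ≤ (B ^ t) i j := by
  have hB : ∀ i j, 0 ≤ B i j := fun i j => le_trans (hA i j) (hAB i j)
  induction t with
  | zero => intro i j; rw [pow_zero, pow_zero]
  | succ t ih =>
    intro i j; rw [pow_succ, pow_succ, Matrix.mul_apply, Matrix.mul_apply]
    refine Finset.sum_le_sum fun k _ => ?_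
    exact mul_le_mul (ih i k) (hAB k j) (hA k j) (pow_apply_nonneg hB t i k)

lemma row_sum_pow_eq_one {Q : Matrix V V ℝ} (h1 : ∀ i, ∑ j, Q i j = 1) (t : ℕ) (i : V) :
    ∑ j, (Q ^ t) i j = 1 := by
  induction t with
  | zero => simp [Matrix.one_apply]
  | succ t ih =>
    simp only [pow_succ, Matrix.mul_apply]
    rw [Finset.sum_comm]
    calc ∑ k, ∑ j, (Q ^ t) i k * Q k j = ∑ k, (Q ^ t) i k * ∑ j, Q k j := by
          simp [Finset.mul_sum]
      _ = 1 := by simp only [h1, mul_one]; exact ih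

lemma row_sum_pow_le_one {A : Matrix V V ℝ} (h0 : ∀ i j, 0 ≤ A i j)
    (h1 : ∀ i, ∑ j, A i j ≤ 1) (t : ℕ) (i : V) : ∑ j, (A ^ t) i j ≤ 1 := by
  induction t with
  | zero => simp [Matrix.one_apply]
  | succ t ih =>
    simp only [pow_succ, Matrix.mul_apply]
    rw [Finset.sum_comm]
    calc ∑ k, ∑ j, (A ^ t) i k * A k j = ∑ k, (A ^ t) i k * ∑ j, A k j := by
          simp [Finset.mul_sum]
      _ ≤ ∑ k, (A ^ t) i k * 1 := by
          refine Finset.sum_le_sum fun k _ => ?_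
          exact mul_le_mul_of_nonneg_left (h1 k) (pow_apply_nonneg h0 t i k)
      _ ≤ 1 := by simpa using ih

lemma row_sum_pow_anti {A : Matrix V V ℝ} (h0 : ∀ i j, 0 ≤ A i j)
    (h1 : ∀ i, ∑ j, A i j ≤ 1) {s t : ℕ} (hst : s ≤ t) (i : V) :
    ∑ j, (A ^ t) i j ≤ ∑ j, (A ^ s) i j := by
  induction t, hst using Nat.le_induction with
  | base => exact le_refl _
  | succ t hst ih =>
    refine le_trans ?_ ih
    simp only [pow_succ, Matrix.mul_apply]
    rw [Finset.sum_comm]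
    calc ∑ k, ∑ j, (A ^ t) i k * A k j = ∑ k, (A ^ t) i k * ∑ j, A k j := by
          simp [Finset.mul_sum]
      _ ≤ ∑ k, (A ^ t) i k * 1 := by
          refine Finset.sum_le_sum fun k _ => ?_
          exact mul_le_mul_of_nonneg_left (h1 k) (pow_apply_nonneg h0 t i k)
      _ = ∑ k, (A ^ t) i k := by simp

lemma l1_smear {S : Matrix V V ℝ} (hS0 : ∀ i j, 0 ≤ S i j) {b : ℝ}
    (hSb : ∀ i, ∑ j, S i j ≤ b) (f : V → ℝ) :
    ∑ u, |∑ w, f w * S w u| ≤ (∑ w, |f w|) * b := by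
  calc ∑ u, |∑ w, f w * S w u| ≤ ∑ u, ∑ w, |f w| * S w u := by
        refine Finset.sum_le_sum fun u _ => ?_
        refine le_trans (Finset.abs_sum_le_sum_abs _ _) ?_
        refine Finset.sum_le_sum fun w _ => ?_
        rw [abs_mul, abs_of_nonneg (hS0 w u)]
    _ = ∑ w, |f w| * ∑ u, S w u := by
        rw [Finset.sum_comm]; simp [Finset.mul_sum]
    _ ≤ ∑ w, |f w| * b := by
        refine Finset.sum_le_sum fun w _ => ?_
        exact mul_le_mul_of_nonneg_left (hSb w) (abs_nonneg _)
    _ = (∑ w, |f w|) * b := by rw [Finset.sum_mul]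

/-! ### Graph lemmas -/

section Graph
variable (G : SimpleGraph V)

lemma deg_eq_card (v : V) :
    deg G v = (Finset.univ.filter (fun u => G.Adj v u)).card := by
  rw [deg, Nat.card_eq_fintype_card, Fintype.card_subtype]
  simp

lemma deg_le_card (v : V) : deg G v ≤ Fintype.card V := by
  rw [deg_eq_card]
  exact le_trans (Finset.card_filter_le _ _) (le_of_eq Finset.card_univ)

lemma transMat_nonneg (v u : V) : 0 ≤ transMat G v u := by
  unfold transMat; split
  · positivity
  · exact le_refl _

lemma transMat_row_sum (v : V) (h : 0 < deg G v) : ∑ u, transMat G v u = 1 := by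
  unfold transMat
  rw [← Finset.sum_filter, Finset.sum_const, ← deg_eq_card, nsmul_eq_mul]
  rw [mul_inv_cancel₀]
  exact_mod_cast h.ne'

lemma transMat_le (v u : V) {d : ℝ} (hd : 0 < d) (hdeg : d ≤ (deg G v : ℝ)) :
    transMat G v u ≤ d⁻¹ := by
  unfold transMat; split
  · exact inv_anti₀ hd hdeg
  · positivity


lemma lazyMat_apply (v u : V) :
    lazyMat G v u = 2⁻¹ * ((if v = u then 1 else 0) + transMat G v u) := by
  simp [lazyMat, Matrix.one_apply]

lemma lazyMat_nonneg (v u : V) : 0 ≤ lazyMat G v u := by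
  rw [lazyMat_apply]
  have := transMat_nonneg G v u
  split <;> nlinarith

lemma lazyMat_row_sum (v : V) (h : 0 < deg G v) : ∑ u, lazyMat G v u = 1 := by
  simp only [lazyMat_apply]
  rw [← Finset.mul_sum, Finset.sum_add_distrib, transMat_row_sum G v h]
  rw [Finset.sum_ite_eq Finset.univ v (fun _ => (1:ℝ))]
  simp
  norm_num

lemma statDist_nonneg (w : V) : 0 ≤ statDist G w := by
  unfold statDist
  positivity

lemma sum_deg_pos [Nonempty V] (h : ∀ w, 0 < deg G w) : 0 < ∑ u, (deg G u : ℝ) :=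
  Finset.sum_pos (fun i _ => by exact_mod_cast h i) Finset.univ_nonempty

lemma statDist_sum [Nonempty V] (h : ∀ w, 0 < deg G w) : ∑ w, statDist G w = 1 := by
  unfold statDist
  rw [← Finset.sum_div, div_self (sum_deg_pos G h).ne']

lemma statDist_pos [Nonempty V] (h : ∀ w, 0 < deg G w) (w : V) : 0 < statDist G w := by
  unfold statDist
  exact div_pos (by exact_mod_cast h w) (sum_deg_pos G h)

lemma statDist_stationary [Nonempty V] (h : ∀ w, 0 < deg G w) (u : V) :
    ∑ w, statDist G w * lazyMat G w u = statDist G u := by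
  have key : ∀ w, statDist G w * transMat G w u
      = if G.Adj u w then (∑ x, (deg G x : ℝ))⁻¹ else 0 := by
    intro w
    unfold statDist transMat
    rw [G.adj_comm u w]
    split
    · rename_i hadj
      rw [div_mul_eq_mul_div, mul_inv_cancel₀ (by exact_mod_cast (h w).ne'), one_div]
    · ring
  have h2 : ∑ w, statDist G w * transMat G w u = statDist G u := by
    simp only [key]
    rw [← Finset.sum_filter, Finset.sum_const, ← deg_eq_card, nsmul_eq_mul]
    unfold statDist
    rw [div_eq_mul_inv]
  simp only [lazyMat_apply, ← Finset.sum_div]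
  have : ∀ w, statDist G w * (2⁻¹ * ((if w = u then 1 else 0) + transMat G w u))
      = 2⁻¹ * (statDist G w * (if w = u then 1 else 0) + statDist G w * transMat G w u) := by
    intro w; ring
  simp only [this]
  rw [← Finset.mul_sum, Finset.sum_add_distrib, h2]
  have h3 : ∑ x, (statDist G x * if x = u then 1 else 0) = statDist G u := by
    rw [Finset.sum_eq_single u]
    · simp
    · intro b _ hb; simp [hb]
    · intro hu; exact absurd (Finset.mem_univ u) hu
  rw [h3]; ring

end Graph
/-! ### Killed matrices -/

/-- `Q` killed on the set `W`. -/
def killed (Q : Matrix V V ℝ) (W : Finset V) : Matrix V V ℝ :=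
  fun u w => if u ∈ W ∨ w ∈ W then 0 else Q u w

section Killed

variable {Q P : Matrix V V ℝ} {W : Finset V}

lemma killed_nonneg (hQ0 : ∀ i j, 0 ≤ Q i j) (i j : V) : 0 ≤ killed Q W i j := by
  unfold killed; split
  · exact le_refl _
  · exact hQ0 i j

lemma killed_le (hQ0 : ∀ i j, 0 ≤ Q i j) (i j : V) : killed Q W i j ≤ Q i j := by
  unfold killed; split
  · exact hQ0 i j
  · exact le_refl _

lemma killed_mono {W' : Finset V} (hQ0 : ∀ i j, 0 ≤ Q i j) (hW : W' ⊆ W) (i j : V) :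
    killed Q W i j ≤ killed Q W' i j := by
  unfold killed
  by_cases h : i ∈ W' ∨ j ∈ W'
  · rcases h with h | h
    · simp [Or.inl (hW h), Or.inl h]
    · simp [Or.inr (hW h), Or.inr h]
  · rw [if_neg h]
    split
    · exact hQ0 i j
    · exact le_refl _

lemma killedMat_eq (G : SimpleGraph V) (W : Finset V) :
    killedMat G W = killed (transMat G) W := by
  funext u w
  unfold killedMat killed
  by_cases h : u ∈ W ∨ w ∈ W
  · rw [if_pos h, if_neg (by tauto)]
  · rw [if_neg h, if_pos (by tauto)]

lemma killed_row_sum_le_one (hQ0 : ∀ i j, 0 ≤ Q i j) (hQ1 : ∀ i, ∑ j, Q i j = 1) (i : V) :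
    ∑ j, killed Q W i j ≤ 1 := by
  rw [← hQ1 i]
  exact Finset.sum_le_sum fun j _ => killed_le hQ0 i j

/-- Avoidance probability for the lazy walk dominates that of the simple walk
over twice the horizon. -/
lemma lazy_killed_ge (hP0 : ∀ i j, 0 ≤ P i j) (hP1 : ∀ i, ∑ j, P i j = 1)
    (hrel : ∀ v u, Q v u = 2⁻¹ * ((if v = u then 1 else 0) + P v u)) :
    ∀ s r : ℕ, s ≤ r → ∀ v ∉ W,
      ∑ u, ((killed P W) ^ r) v u ≤ ∑ u, ((killed Q W) ^ s) v u := by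
  have hPrs : ∀ r v, ∑ u, ((killed P W) ^ r) v u ≤ 1 :=
    fun r v => row_sum_pow_le_one (killed_nonneg hP0) (killed_row_sum_le_one hP0 hP1) r v
  intro s
  induction s with
  | zero =>
    intro r hr v hv
    rw [pow_zero]
    have h1 : ∑ u, (1 : Matrix V V ℝ) v u = 1 := by simp [Matrix.one_apply]
    rw [h1]
    exact hPrs r v
  | succ s ih =>
    intro r hr v hv
    rcases r with _ | r'
    · omega
    have hr' : s ≤ r' := by omega
    -- expand lazy side
    have expandQ : ∑ u, ((killed Q W) ^ (s+1)) v u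
        = ∑ w, killed Q W v w * ∑ u, ((killed Q W) ^ s) w u := by
      simp only [pow_succ', Matrix.mul_apply]
      rw [Finset.sum_comm]
      simp [Finset.mul_sum]
    have expandP : ∑ u, ((killed P W) ^ (r'+1)) v u
        = ∑ w, killed P W v w * ∑ u, ((killed P W) ^ r') w u := by
      simp only [pow_succ', Matrix.mul_apply]
      rw [Finset.sum_comm]
      simp [Finset.mul_sum]
    rw [expandQ, expandP]
    have hkey : ∀ w, killed Q W v w * ∑ u, ((killed Q W) ^ s) w u
        = 2⁻¹ * ((if v = w ∧ w ∉ W then 1 else 0) * ∑ u, ((killed Q W) ^ s) w u)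
          + 2⁻¹ * (killed P W v w * ∑ u, ((killed Q W) ^ s) w u) := by
      intro w
      by_cases hw : w ∈ W
      · have h1 : killed Q W v w = 0 := by simp [killed, hw]
        have h2 : killed P W v w = 0 := by simp [killed, hw]
        rw [h1, h2, if_neg (by tauto)]
        ring
      · have h1 : killed Q W v w = Q v w := by simp [killed, hw, hv]
        have h2 : killed P W v w = P v w := by simp [killed, hw, hv]
        rw [h1, h2, hrel]
        by_cases hvw : v = w
        · rw [if_pos hvw, if_pos ⟨hvw, hw⟩]; ring
        · rw [if_neg hvw, if_neg (by tauto)]; ring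
    rw [Finset.sum_congr rfl (fun w _ => hkey w), Finset.sum_add_distrib]
    have e1 : ∑ w, 2⁻¹ * ((if v = w ∧ w ∉ W then 1 else 0) * ∑ u, ((killed Q W) ^ s) w u)
        = 2⁻¹ * ∑ u, ((killed Q W) ^ s) v u := by
      rw [← Finset.mul_sum]
      congr 1
      rw [Finset.sum_eq_single v]
      · rw [if_pos ⟨rfl, hv⟩, one_mul]
      · intro b _ hb
        rw [if_neg (fun h => hb h.1.symm), zero_mul]
      · intro h; exact absurd (Finset.mem_univ v) h
    rw [e1]
    have e2 : ∑ w, 2⁻¹ * (killed P W v w * ∑ u, ((killed Q W) ^ s) w u)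
        ≥ 2⁻¹ * ∑ w, killed P W v w * ∑ u, ((killed P W) ^ r') w u := by
      rw [← Finset.mul_sum]
      refine mul_le_mul_of_nonneg_left ?_ (by norm_num)
      refine Finset.sum_le_sum fun w _ => ?_
      by_cases hw : w ∈ W
      · simp [killed, hw]
      · exact mul_le_mul_of_nonneg_left (ih r' hr' w hw) (killed_nonneg hP0 v w)
    have e3 : ∑ u, ((killed P W) ^ (r'+1)) v u ≤ ∑ u, ((killed Q W) ^ s) v u := by
      refine le_trans (row_sum_pow_anti (killed_nonneg hP0)
        (killed_row_sum_le_one hP0 hP1) (by omega : r' ≤ r'+1) v) (ih r' hr' v hv)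
    rw [expandP] at e3
    linarith [e2, e3]

/-- Escape probability bound: within `j` steps of the killed walk the deficit is at
most `j * q`. -/
lemma escape_bound (hQ0 : ∀ i j, 0 ≤ Q i j) (hQ1 : ∀ i, ∑ j, Q i j = 1)
    {q : ℝ} (hq : 0 ≤ q) (hQW : ∀ w ∉ W, ∑ x ∈ W, Q w x ≤ q) :
    ∀ (j : ℕ), ∀ w ∉ W, 1 - ∑ u, ((killed Q W) ^ j) w u ≤ j * q := by
  intro j
  induction j with
  | zero =>
    intro w hw
    rw [pow_zero]
    have h1 : ∑ u, (1 : Matrix V V ℝ) w u = 1 := by simp [Matrix.one_apply]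
    rw [h1]
    simp
  | succ j ih =>
    intro w hw
    have expandQ : ∑ u, ((killed Q W) ^ (j+1)) w u
        = ∑ x, killed Q W w x * ∑ u, ((killed Q W) ^ j) x u := by
      simp only [pow_succ', Matrix.mul_apply]
      rw [Finset.sum_comm]
      simp [Finset.mul_sum]
    rw [expandQ]
    have hsplit : ∑ x, killed Q W w x * ∑ u, ((killed Q W) ^ j) x u
        = ∑ x ∈ Finset.univ.filter (fun x => x ∉ W),
            Q w x * ∑ u, ((killed Q W) ^ j) x u := by
      rw [Finset.sum_filter]
      refine Finset.sum_congr rfl fun x _ => ?_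
      by_cases hx : x ∈ W
      · simp [killed, hx]
      · simp [killed, hx, hw]
    rw [hsplit]
    have hrow : ∑ x ∈ Finset.univ.filter (fun x => x ∉ W), Q w x
        = 1 - ∑ x ∈ W, Q w x := by
      have := hQ1 w
      rw [← Finset.sum_filter_add_sum_filter_not Finset.univ (fun x => x ∈ W)] at this
      have h1 : ∑ x ∈ Finset.univ.filter (fun x => x ∈ W), Q w x = ∑ x ∈ W, Q w x := by
        refine Finset.sum_congr ?_ (fun _ _ => rfl)
        ext x; simp
      linarith [this, h1]
    have hterm : ∀ x ∈ Finset.univ.filter (fun x => x ∉ W),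
        Q w x * (1 - (j:ℝ) * q) ≤ Q w x * ∑ u, ((killed Q W) ^ j) x u := by
      intro x hx
      simp only [Finset.mem_filter] at hx
      refine mul_le_mul_of_nonneg_left ?_ (hQ0 w x)
      have := ih x hx.2
      linarith
    have hsum1 : ∑ x ∈ Finset.univ.filter (fun x => x ∉ W), Q w x * (1 - (j:ℝ) * q)
        ≤ ∑ x ∈ Finset.univ.filter (fun x => x ∉ W), Q w x * ∑ u, ((killed Q W) ^ j) x u :=
      Finset.sum_le_sum hterm
    rw [← Finset.sum_mul, hrow] at hsum1
    have hW1 : ∑ x ∈ W, Q w x ≤ q := hQW w hw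
    have hW0 : 0 ≤ ∑ x ∈ W, Q w x := Finset.sum_nonneg fun x _ => hQ0 w x
    have hj : (0:ℝ) ≤ (j:ℝ) := Nat.cast_nonneg j
    push_cast
    nlinarith [hsum1, mul_nonneg hW0 (mul_nonneg hj hq)]

end Killed

/-- Entrywise bound on powers of the lazy matrix. -/
lemma qpow_bound {Q P : Matrix V V ℝ} {c : ℝ} (hc : 0 ≤ c)
    (hP0 : ∀ i j, 0 ≤ P i j) (hPc : ∀ i j, P i j ≤ c)
    (hQ0 : ∀ i j, 0 ≤ Q i j) (hQ1 : ∀ i, ∑ j, Q i j = 1)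
    (hrel : ∀ v u, Q v u = 2⁻¹ * ((if v = u then 1 else 0) + P v u)) :
    ∀ (d : ℕ) (x y : V), (Q ^ d) x y ≤ (2⁻¹ : ℝ) ^ d * (if x = y then 1 else 0) + c := by
  intro d
  induction d with
  | zero =>
    intro x y
    rw [pow_zero, Matrix.one_apply, pow_zero, one_mul]
    split <;> nlinarith
  | succ d ih =>
    intro x y
    have expand : (Q ^ (d+1)) x y = ∑ z, (Q ^ d) x z * Q z y := by
      rw [pow_succ, Matrix.mul_apply]
    rw [expand]
    have hstep : ∀ z, (Q ^ d) x z * Q z y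
        ≤ (Q ^ d) x z * (2⁻¹ * (if z = y then 1 else 0)) + (Q ^ d) x z * (2⁻¹ * c) := by
      intro z
      rw [hrel z y]
      have h0 := pow_apply_nonneg hQ0 d x z
      have h1 := hPc z y
      have h2 := hP0 z y
      by_cases hzy : z = y
      · subst hzy; rw [if_pos rfl]; nlinarith
      · rw [if_neg hzy]; nlinarith
    calc ∑ z, (Q ^ d) x z * Q z y
        ≤ ∑ z, ((Q ^ d) x z * (2⁻¹ * (if z = y then 1 else 0)) + (Q ^ d) x z * (2⁻¹ * c)) :=
          Finset.sum_le_sum fun z _ => hstep z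
      _ = 2⁻¹ * (Q ^ d) x y + 2⁻¹ * c := by
          rw [Finset.sum_add_distrib]
          congr 1
          · rw [Finset.sum_eq_single y]
            · rw [if_pos rfl]; ring
            · intro b _ hb; rw [if_neg hb]; ring
            · intro h; exact absurd (Finset.mem_univ y) h
          · rw [← Finset.sum_mul, row_sum_pow_eq_one hQ1 d x]; ring
      _ ≤ 2⁻¹ * ((2⁻¹:ℝ) ^ d * (if x = y then 1 else 0) + c) + 2⁻¹ * c := by
          have := ih x y; nlinarith
      _ ≤ (2⁻¹:ℝ) ^ (d+1) * (if x = y then 1 else 0) + c := by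
          rw [pow_succ]; split <;> nlinarith
/-! ### First-visit decomposition -/

/-- `Q` with rows in `W` killed. -/
def rowKilled (Q : Matrix V V ℝ) (W : Finset V) : Matrix V V ℝ :=
  fun z x => if z ∈ W then 0 else Q z x

/-- The sub-probability mass of walks that have avoided `W` up to time `i`. -/
def fvisit (Q : Matrix V V ℝ) (W : Finset V) (pi : V → ℝ) (i : ℕ) (x : V) : ℝ :=
  ∑ w, pi w * ((rowKilled Q W) ^ i) w x

section FirstVisit

variable {Q : Matrix V V ℝ} {W : Finset V} {pi : V → ℝ}

lemma rowKilled_nonneg (hQ0 : ∀ i j, 0 ≤ Q i j) (i j : V) : 0 ≤ rowKilled Q W i j := by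
  unfold rowKilled; split
  · exact le_refl _
  · exact hQ0 i j

lemma rowKilled_row_sum (hQ1 : ∀ i, ∑ j, Q i j = 1) (z : V) :
    ∑ x, rowKilled Q W z x = if z ∈ W then 0 else 1 := by
  unfold rowKilled
  by_cases hz : z ∈ W <;> simp [hz, hQ1 z]

lemma fvisit_zero (x : V) : fvisit Q W pi 0 x = pi x := by
  unfold fvisit
  rw [pow_zero, Finset.sum_eq_single x]
  · simp [Matrix.one_apply]
  · intro b _ hb; simp [Matrix.one_apply, hb]
  · intro h; exact absurd (Finset.mem_univ x) h

lemma fvisit_succ (i : ℕ) (x : V) :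
    fvisit Q W pi (i+1) x = ∑ z, fvisit Q W pi i z * rowKilled Q W z x := by
  unfold fvisit
  simp only [pow_succ, Matrix.mul_apply, Finset.mul_sum, Finset.sum_mul]
  rw [Finset.sum_comm]
  refine Finset.sum_congr rfl fun z _ => ?_
  refine Finset.sum_congr rfl fun w _ => ?_
  ring

lemma fvisit_nonneg (hQ0 : ∀ i j, 0 ≤ Q i j) (hpi0 : ∀ w, 0 ≤ pi w) (i : ℕ) (x : V) :
    0 ≤ fvisit Q W pi i x :=
  Finset.sum_nonneg fun w _ =>
    mul_nonneg (hpi0 w) (pow_apply_nonneg (rowKilled_nonneg hQ0) i w x)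

lemma fvisit_total_succ (hQ1 : ∀ i, ∑ j, Q i j = 1) (i : ℕ) :
    ∑ x, fvisit Q W pi (i+1) x
      = ∑ x, fvisit Q W pi i x * (if x ∈ W then 0 else 1) := by
  simp only [fvisit_succ]
  rw [Finset.sum_comm]
  refine Finset.sum_congr rfl fun z _ => ?_
  rw [← Finset.mul_sum, rowKilled_row_sum hQ1]

/-- Telescoping: total first-visit mass within `[0,m]`. -/
lemma fvisit_telescope (hQ1 : ∀ i, ∑ j, Q i j = 1) (hpi1 : ∑ w, pi w = 1) (m : ℕ) :
    ∑ i ∈ Finset.range (m+1), ∑ x ∈ W, fvisit Q W pi i x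
      = 1 - ∑ x, fvisit Q W pi (m+1) x := by
  have hterm : ∀ i, ∑ x ∈ W, fvisit Q W pi i x
      = (∑ x, fvisit Q W pi i x) - ∑ x, fvisit Q W pi (i+1) x := by
    intro i
    rw [fvisit_total_succ hQ1 i]
    have hsplit := Finset.sum_filter_add_sum_filter_not Finset.univ (fun x => x ∈ W)
      (fun x => fvisit Q W pi i x)
    have h1 : ∑ x ∈ Finset.univ.filter (fun x => x ∈ W), fvisit Q W pi i x
        = ∑ x ∈ W, fvisit Q W pi i x := by
      refine Finset.sum_congr ?_ (fun _ _ => rfl)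
      ext x; simp
    have h2 : ∑ x, fvisit Q W pi i x * (if x ∈ W then 0 else 1)
        = ∑ x ∈ Finset.univ.filter (fun x => x ∉ W), fvisit Q W pi i x := by
      rw [Finset.sum_filter]
      refine Finset.sum_congr rfl fun x _ => ?_
      by_cases hx : x ∈ W <;> simp [hx]
    rw [h2]
    linarith [hsplit, h1]
  calc ∑ i ∈ Finset.range (m+1), ∑ x ∈ W, fvisit Q W pi i x
      = ∑ i ∈ Finset.range (m+1),
          ((∑ x, fvisit Q W pi i x) - ∑ x, fvisit Q W pi (i+1) x) :=
        Finset.sum_congr rfl fun i _ => hterm i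
    _ = (∑ x, fvisit Q W pi 0 x) - ∑ x, fvisit Q W pi (m+1) x :=
        Finset.sum_range_sub' (fun i => ∑ x, fvisit Q W pi i x) (m+1)
    _ = 1 - ∑ x, fvisit Q W pi (m+1) x := by
        simp only [fvisit_zero]; rw [hpi1]

/-- Bridge between row-killed and fully killed walks. -/
lemma killed_pow_eq (m : ℕ) :
    (killed Q W) ^ (m+1)
      = (rowKilled Q W) ^ (m+1)
          * Matrix.diagonal (fun w => if w ∈ W then (0:ℝ) else 1) := by
  set D := Matrix.diagonal (fun w => if w ∈ W then (0:ℝ) else 1) with hD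
  have id1 : killed Q W = rowKilled Q W * D := by
    funext u w
    rw [hD, Matrix.mul_diagonal]
    unfold killed rowKilled
    by_cases hu : u ∈ W <;> by_cases hw : w ∈ W <;> simp [hu, hw]
  have id2 : D * rowKilled Q W = rowKilled Q W := by
    funext u w
    rw [hD, Matrix.diagonal_mul]
    unfold rowKilled
    by_cases hu : u ∈ W <;> simp [hu]
  induction m with
  | zero => simpa using id1
  | succ m ih =>
    calc (killed Q W) ^ (m+2) = (killed Q W) ^ (m+1) * killed Q W := pow_succ _ _
      _ = ((rowKilled Q W) ^ (m+1) * D) * (rowKilled Q W * D) := by rw [ih, id1]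
      _ = (rowKilled Q W) ^ (m+1) * (D * rowKilled Q W) * D := by
          rw [mul_assoc, mul_assoc, mul_assoc]
      _ = (rowKilled Q W) ^ (m+2) * D := by rw [id2, ← pow_succ]

lemma fvisit_final (hQ1 : ∀ i, ∑ j, Q i j = 1) {m : ℕ} (hm : 1 ≤ m) :
    ∑ x, fvisit Q W pi (m+1) x
      = ∑ w, pi w * ∑ u, ((killed Q W) ^ m) w u := by
  obtain ⟨m', rfl⟩ : ∃ m', m = m' + 1 := ⟨m - 1, by omega⟩
  unfold fvisit
  rw [Finset.sum_comm]
  refine Finset.sum_congr rfl fun w _ => ?_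
  rw [← Finset.mul_sum]
  congr 1
  -- row sums agree
  rw [killed_pow_eq]
  have lhs : ∑ x, ((rowKilled Q W) ^ (m' + 1 + 1)) w x
      = ∑ z, ((rowKilled Q W) ^ (m'+1)) w z * (if z ∈ W then 0 else 1) := by
    simp only [pow_succ, Matrix.mul_apply]
    rw [Finset.sum_comm]
    refine Finset.sum_congr rfl fun z _ => ?_
    rw [← Finset.mul_sum, rowKilled_row_sum hQ1]
  rw [lhs]
  have rhs : ∑ u, ((rowKilled Q W) ^ (m'+1)
        * Matrix.diagonal (fun w => if w ∈ W then (0:ℝ) else 1)) w u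
      = ∑ z, ((rowKilled Q W) ^ (m'+1)) w z * (if z ∈ W then 0 else 1) := by
    simp only [Matrix.mul_apply]
    rw [Finset.sum_comm]
    refine Finset.sum_congr rfl fun z _ => ?_
    rw [← Finset.mul_sum]
    congr 1
    rw [Finset.sum_eq_single z]
    · rw [Matrix.diagonal_apply_eq]
    · intro b _ hb
      exact Matrix.diagonal_apply_ne _ hb.symm
    · intro h; exact absurd (Finset.mem_univ z) h
  rw [rhs]

end FirstVisit
section KeyIdentity

variable {Q : Matrix V V ℝ} {W : Finset V} {pi : V → ℝ}

/-- First-visit decomposition identity. -/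
lemma first_visit_identity (hQ0 : ∀ i j, 0 ≤ Q i j)
    (hstat : ∀ u, ∑ w, pi w * Q w u = pi u) :
    ∀ (j : ℕ) (y : V),
      pi y = (∑ i ∈ Finset.range (j+1), ∑ x ∈ W, fvisit Q W pi i x * (Q ^ (j - i)) x y)
        + fvisit Q W pi j y * (if y ∈ W then 0 else 1) := by
  have hsplit : ∀ (g : V → ℝ) (y : V),
      g y = (∑ x ∈ W, g x * (Q ^ 0) x y) + g y * (if y ∈ W then 0 else 1) := by
    intro g y
    have h1 : ∑ x ∈ W, g x * (Q ^ 0) x y = if y ∈ W then g y else 0 := by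
      rw [pow_zero]
      calc ∑ x ∈ W, g x * (1 : Matrix V V ℝ) x y
          = ∑ x ∈ W, if x = y then g x else 0 := by
            refine Finset.sum_congr rfl fun x _ => ?_
            rw [Matrix.one_apply]
            by_cases hxy : x = y <;> simp [hxy]
        _ = if y ∈ W then g y else 0 := Finset.sum_ite_eq' W y g
    rw [h1]
    by_cases hy : y ∈ W <;> simp [hy]
  intro j
  induction j with
  | zero =>
    intro y
    rw [Finset.sum_range_one]
    simp only [Nat.zero_sub, fvisit_zero]
    exact hsplit pi y
  | succ j ih =>
    intro y
    have step1 : pi y = ∑ w, pi w * Q w y := (hstat y).symm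
    have step2 : ∀ w, pi w * Q w y
        = (∑ i ∈ Finset.range (j+1), ∑ x ∈ W, fvisit Q W pi i x * ((Q ^ (j - i)) x w * Q w y))
          + fvisit Q W pi j w * (if w ∈ W then 0 else 1) * Q w y := by
      intro w
      rw [ih w]
      rw [add_mul, Finset.sum_mul]
      congr 1
      refine Finset.sum_congr rfl fun i _ => ?_
      rw [Finset.sum_mul]
      refine Finset.sum_congr rfl fun x _ => ?_
      ring
    rw [step1, Finset.sum_congr rfl (fun w _ => step2 w), Finset.sum_add_distrib]
    have e1 : ∑ w, (∑ i ∈ Finset.range (j+1), ∑ x ∈ W,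
          fvisit Q W pi i x * ((Q ^ (j - i)) x w * Q w y))
        = ∑ i ∈ Finset.range (j+1), ∑ x ∈ W, fvisit Q W pi i x * (Q ^ (j + 1 - i)) x y := by
      rw [Finset.sum_comm]
      refine Finset.sum_congr rfl fun i hi => ?_
      rw [Finset.sum_comm]
      refine Finset.sum_congr rfl fun x _ => ?_
      rw [← Finset.mul_sum]
      congr 1
      have hji : j + 1 - i = (j - i) + 1 := by
        rw [Finset.mem_range] at hi; omega
      rw [hji, pow_succ, Matrix.mul_apply]
    have e2 : ∑ w, fvisit Q W pi j w * (if w ∈ W then 0 else 1) * Q w y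
        = fvisit Q W pi (j+1) y := by
      rw [fvisit_succ]
      refine Finset.sum_congr rfl fun w _ => ?_
      unfold rowKilled
      by_cases hw : w ∈ W <;> simp [hw]
    have hs := hsplit (fvisit Q W pi (j+1)) y
    rw [e1, e2]
    conv_rhs => rw [Finset.sum_range_succ]
    simp only [Nat.sub_self]
    linarith [hs]

/-- Triangle-sum inequality. -/
lemma triangle_sum_le (H : ℕ → ℕ → ℝ) (hH : ∀ i d, 0 ≤ H i d) (m : ℕ) :
    ∑ j ∈ Finset.range (m+1), ∑ i ∈ Finset.range (j+1), H i (j - i)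
      ≤ ∑ i ∈ Finset.range (m+1), ∑ d ∈ Finset.range (m+1), H i d := by
  have step1 : ∀ j ∈ Finset.range (m+1),
      ∑ i ∈ Finset.range (j+1), H i (j - i)
        = ∑ i ∈ Finset.range (m+1), if i ≤ j then H i (j - i) else 0 := by
    intro j hj
    rw [Finset.mem_range] at hj
    have h1 : ∑ i ∈ Finset.range (j+1), H i (j-i)
        = ∑ i ∈ Finset.range (j+1), (if i ≤ j then H i (j - i) else 0) := by
      refine Finset.sum_congr rfl fun i hi => ?_
      rw [Finset.mem_range] at hi
      rw [if_pos (by omega)]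
    rw [h1]
    refine Finset.sum_subset (Finset.range_subset_range.mpr (by omega)) ?_
    intro x _ hx
    rw [Finset.mem_range] at hx
    rw [if_neg (by omega)]
  rw [Finset.sum_congr rfl step1, Finset.sum_comm]
  refine Finset.sum_le_sum fun i hi => ?_
  rw [Finset.mem_range] at hi
  have step2 : ∑ j ∈ Finset.range (m+1), (if i ≤ j then H i (j - i) else 0)
      = ∑ d ∈ Finset.range (m+1-i), H i d := by
    rw [← Finset.sum_filter]
    have hfil : (Finset.range (m+1)).filter (fun j => i ≤ j) = Finset.Ico i (m+1) := by
      ext j; simp [Finset.mem_range, Finset.mem_Ico]; omega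
    rw [hfil, Finset.sum_Ico_eq_sum_range]
    refine Finset.sum_congr rfl fun d _ => ?_
    congr 1
    omega
  rw [step2]
  refine Finset.sum_le_sum_of_subset_of_nonneg (Finset.range_subset_range.mpr (by omega)) ?_
  intro d _ _
  exact hH i d

/-- Main lower bound on the expected hitting mass from stationarity. -/
lemma expected_hit_lower {m : ℕ} (hm : 1 ≤ m)
    (hQ0 : ∀ i j, 0 ≤ Q i j) (hQ1 : ∀ i, ∑ j, Q i j = 1)
    (hpi0 : ∀ w, 0 ≤ pi w) (hpi1 : ∑ w, pi w = 1)
    (hstat : ∀ u, ∑ w, pi w * Q w u = pi u)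
    {B : ℝ}
    (hB : ∀ x ∈ W, ∑ d ∈ Finset.range (m+1), ∑ y ∈ W, (Q ^ d) x y ≤ B) :
    ((m:ℝ) + 1) * (∑ x ∈ W, pi x)
      ≤ B * (∑ w, pi w * (1 - ∑ u, ((killed Q W) ^ m) w u)) := by
  set H : ℕ → ℕ → ℝ :=
    fun i d => ∑ x ∈ W, fvisit Q W pi i x * ∑ y ∈ W, (Q ^ d) x y with hH
  have hHnn : ∀ i d, 0 ≤ H i d := by
    intro i d
    refine Finset.sum_nonneg fun x _ => mul_nonneg (fvisit_nonneg hQ0 hpi0 i x) ?_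
    exact Finset.sum_nonneg fun y _ => pow_apply_nonneg hQ0 d x y
  have hWsum : ∀ j, ∑ x ∈ W, pi x
      = ∑ i ∈ Finset.range (j+1), H i (j - i) := by
    intro j
    calc ∑ y ∈ W, pi y
        = ∑ y ∈ W, ((∑ i ∈ Finset.range (j+1), ∑ x ∈ W,
              fvisit Q W pi i x * (Q ^ (j - i)) x y)
            + fvisit Q W pi j y * (if y ∈ W then 0 else 1)) :=
          Finset.sum_congr rfl fun y _ => first_visit_identity (W := W) hQ0 hstat j y
      _ = ∑ y ∈ W, ∑ i ∈ Finset.range (j+1), ∑ x ∈ W,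
              fvisit Q W pi i x * (Q ^ (j - i)) x y := by
          rw [Finset.sum_add_distrib]
          have : ∑ y ∈ W, fvisit Q W pi j y * (if y ∈ W then 0 else 1) = 0 := by
            refine Finset.sum_eq_zero fun y hy => ?_
            rw [if_pos hy, mul_zero]
          rw [this, add_zero]
      _ = ∑ i ∈ Finset.range (j+1), H i (j - i) := by
          rw [Finset.sum_comm]
          refine Finset.sum_congr rfl fun i _ => ?_
          rw [hH]
          rw [Finset.sum_comm]
          refine Finset.sum_congr rfl fun x _ => ?_
          rw [Finset.mul_sum]
  calc ((m:ℝ) + 1) * (∑ x ∈ W, pi x)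
      = ∑ j ∈ Finset.range (m+1), ∑ x ∈ W, pi x := by
        rw [Finset.sum_const, Finset.card_range, nsmul_eq_mul]
        push_cast; ring
    _ = ∑ j ∈ Finset.range (m+1), ∑ i ∈ Finset.range (j+1), H i (j - i) :=
        Finset.sum_congr rfl fun j _ => hWsum j
    _ ≤ ∑ i ∈ Finset.range (m+1), ∑ d ∈ Finset.range (m+1), H i d :=
        triangle_sum_le H hHnn m
    _ = ∑ i ∈ Finset.range (m+1), ∑ x ∈ W,
          fvisit Q W pi i x * ∑ d ∈ Finset.range (m+1), ∑ y ∈ W, (Q ^ d) x y := by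
        refine Finset.sum_congr rfl fun i _ => ?_
        rw [hH, Finset.sum_comm]
        refine Finset.sum_congr rfl fun x _ => ?_
        rw [Finset.mul_sum]
    _ ≤ ∑ i ∈ Finset.range (m+1), ∑ x ∈ W, fvisit Q W pi i x * B := by
        refine Finset.sum_le_sum fun i _ => Finset.sum_le_sum fun x hx => ?_
        exact mul_le_mul_of_nonneg_left (hB x hx) (fvisit_nonneg hQ0 hpi0 i x)
    _ = B * ∑ i ∈ Finset.range (m+1), ∑ x ∈ W, fvisit Q W pi i x := by
        rw [Finset.mul_sum]
        refine Finset.sum_congr rfl fun i _ => ?_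
        rw [Finset.mul_sum]
        refine Finset.sum_congr rfl fun x _ => ?_
        ring
    _ = B * (1 - ∑ x, fvisit Q W pi (m+1) x) := by
        rw [fvisit_telescope hQ1 hpi1 m]
    _ = B * (∑ w, pi w * (1 - ∑ u, ((killed Q W) ^ m) w u)) := by
        congr 1
        rw [fvisit_final hQ1 hm]
        have hexp : ∑ w, pi w * (1 - ∑ u, ((killed Q W) ^ m) w u)
            = (∑ w, pi w) - ∑ w, pi w * ∑ u, ((killed Q W) ^ m) w u := by
          rw [← Finset.sum_sub_distrib]
          refine Finset.sum_congr rfl fun w _ => ?_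
          ring
        rw [hexp, hpi1]

end KeyIdentity
/-! ### Mixing -/

section Mixing

variable {G : SimpleGraph V}

lemma lazy_diag_ge (u : V) : (2:ℝ)⁻¹ ≤ lazyMat G u u := by
  rw [lazyMat_apply, if_pos rfl]
  have h1 := transMat_nonneg G u u
  nlinarith

lemma lazy_pos_of_adj (hd : ∀ w, 0 < deg G w) {u x : V} (h : G.Adj u x) :
    0 < lazyMat G u x := by
  rw [lazyMat_apply, if_neg (G.ne_of_adj h)]
  have h1 : transMat G u x = (deg G u : ℝ)⁻¹ := by
    unfold transMat; rw [if_pos h]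
  rw [h1]
  have h2 : (0:ℝ) < (deg G u : ℝ) := by exact_mod_cast hd u
  positivity

lemma lazy_pow_pos (hd : ∀ w, 0 < deg G w) :
    ∀ (j : ℕ) (u w : V) (p : G.Walk u w), p.length ≤ j → 0 < ((lazyMat G) ^ j) u w := by
  intro j
  induction j with
  | zero =>
    intro u w p hp
    have : u = w := p.eq_of_length_eq_zero (Nat.le_zero.mp hp)
    subst this
    rw [pow_zero, Matrix.one_apply_eq]
    norm_num
  | succ j ih =>
    intro u w p hp
    have expand : ((lazyMat G) ^ (j+1)) u w = ∑ x, lazyMat G u x * ((lazyMat G) ^ j) x w := by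
      rw [pow_succ', Matrix.mul_apply]
    rw [expand]
    cases p with
    | nil =>
      have hterm : 0 < lazyMat G u u * ((lazyMat G) ^ j) u u := by
        have h1 : (0:ℝ) < 2⁻¹ := by norm_num
        exact mul_pos (lt_of_lt_of_le h1 (lazy_diag_ge u))
          (ih u u SimpleGraph.Walk.nil (by simp))
      refine lt_of_lt_of_le hterm ?_
      refine Finset.single_le_sum
        (f := fun x => lazyMat G u x * ((lazyMat G) ^ j) x u) (fun x _ => ?_)
        (Finset.mem_univ u)
      exact mul_nonneg (lazyMat_nonneg G u x) (pow_apply_nonneg (lazyMat_nonneg G) j x u)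
    | cons hadj q =>
      rename_i x
      have hterm : 0 < lazyMat G u x * ((lazyMat G) ^ j) x w := by
        refine mul_pos (lazy_pos_of_adj hd hadj) (ih x w q ?_)
        simpa using hp
      refine lt_of_lt_of_le hterm ?_
      refine Finset.single_le_sum
        (f := fun y => lazyMat G u y * ((lazyMat G) ^ j) y w) (fun y _ => ?_)
        (Finset.mem_univ x)
      exact mul_nonneg (lazyMat_nonneg G u y) (pow_apply_nonneg (lazyMat_nonneg G) j y w)

lemma statDist_stationary_pow [Nonempty V] (hd : ∀ w, 0 < deg G w) (j : ℕ) (u : V) :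
    ∑ w, statDist G w * ((lazyMat G) ^ j) w u = statDist G u := by
  induction j generalizing u with
  | zero =>
    rw [pow_zero, Finset.sum_eq_single u]
    · simp [Matrix.one_apply]
    · intro b _ hb; simp [Matrix.one_apply, hb]
    · intro h; exact absurd (Finset.mem_univ u) h
  | succ j ih =>
    have expand : ∀ w, ((lazyMat G) ^ (j+1)) w u
        = ∑ z, ((lazyMat G) ^ j) w z * lazyMat G z u := by
      intro w; rw [pow_succ, Matrix.mul_apply]
    calc ∑ w, statDist G w * ((lazyMat G) ^ (j+1)) w u
        = ∑ z, (∑ w, statDist G w * ((lazyMat G) ^ j) w z) * lazyMat G z u := by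
          simp only [expand, Finset.mul_sum, Finset.sum_mul]
          rw [Finset.sum_comm]
          refine Finset.sum_congr rfl fun z _ => Finset.sum_congr rfl fun w _ => ?_
          ring
      _ = ∑ z, statDist G z * lazyMat G z u := by
          refine Finset.sum_congr rfl fun z _ => ?_
          rw [ih z]
      _ = statDist G u := statDist_stationary G hd u

lemma tmix_bound [Nonempty V] (hconn : G.Connected) (hd : ∀ w, 0 < deg G w)
    {ε' : ℝ} (hε' : 0 < ε') (v : V) :
    ∑ u, |((lazyMat G) ^ (tmix G ε')) v u - statDist G u| < 2 * ε' := by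
  have hQ0 : ∀ i j, 0 ≤ lazyMat G i j := lazyMat_nonneg G
  have hQ1 : ∀ i, ∑ j, lazyMat G i j = 1 := fun i => lazyMat_row_sum G i (hd i)
  have hπ1 : ∑ w, statDist G w = 1 := statDist_sum G hd
  have hπpos : ∀ w, 0 < statDist G w := statDist_pos G hd
  have habs : ∀ a b : ℝ, |a - b| ≤ |a| + |b| := fun a b => by
    rw [sub_eq_add_neg]
    exact le_trans (abs_add_le a (-b)) (by rw [abs_neg])
  -- monotonicity
  have dmono : ∀ s : ℕ, ∑ u, |((lazyMat G) ^ (s+1)) v u - statDist G u|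
      ≤ ∑ u, |((lazyMat G) ^ s) v u - statDist G u| := by
    intro s
    have hdiff : ∀ u, ((lazyMat G) ^ (s+1)) v u - statDist G u
        = ∑ w, (((lazyMat G) ^ s) v w - statDist G w) * lazyMat G w u := by
      intro u
      have h2 : ∑ w, (((lazyMat G) ^ s) v w - statDist G w) * lazyMat G w u
          = (∑ w, ((lazyMat G) ^ s) v w * lazyMat G w u)
            - ∑ w, statDist G w * lazyMat G w u := by
        rw [← Finset.sum_sub_distrib]
        refine Finset.sum_congr rfl fun w _ => ?_
        ring
      rw [h2, statDist_stationary G hd u, pow_succ, Matrix.mul_apply]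
    calc ∑ u, |((lazyMat G) ^ (s+1)) v u - statDist G u|
        = ∑ u, |∑ w, (((lazyMat G) ^ s) v w - statDist G w) * lazyMat G w u| :=
          Finset.sum_congr rfl fun u _ => by rw [hdiff u]
      _ ≤ (∑ w, |((lazyMat G) ^ s) v w - statDist G w|) * 1 :=
          l1_smear hQ0 (fun i => le_of_eq (hQ1 i)) _
      _ = ∑ w, |((lazyMat G) ^ s) v w - statDist G w| := by rw [mul_one]
  have dmono' : ∀ s t : ℕ, s ≤ t →
      ∑ u, |((lazyMat G) ^ t) v u - statDist G u|
        ≤ ∑ u, |((lazyMat G) ^ s) v u - statDist G u| := by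
    intro s t hst
    induction t, hst using Nat.le_induction with
    | base => exact le_refl _
    | succ t hst ih => exact le_trans (dmono t) ih
  -- Doeblin minorization
  set r := Fintype.card V - 1 with hrdef
  have hwalkpos : ∀ u w : V, 0 < ((lazyMat G) ^ r) u w := by
    intro u w
    obtain ⟨p⟩ := hconn.preconnected u w
    refine lazy_pow_pos hd r u w p.bypass ?_
    have h1 := p.bypass_isPath.length_lt
    omega
  have huniv : (Finset.univ : Finset (V × V)).Nonempty := Finset.univ_nonempty
  set α := Finset.inf' Finset.univ huniv
    (fun p : V × V => ((lazyMat G) ^ r) p.1 p.2 / statDist G p.2) with hαdef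
  have hα0 : 0 < α := by
    rw [hαdef, Finset.lt_inf'_iff]
    intro p _
    exact div_pos (hwalkpos p.1 p.2) (hπpos p.2)
  have hαπ : ∀ u w, α * statDist G w ≤ ((lazyMat G) ^ r) u w := by
    intro u w
    have h1 : α ≤ ((lazyMat G) ^ r) u w / statDist G w :=
      Finset.inf'_le _ (Finset.mem_univ (u, w))
    rw [le_div_iff₀ (hπpos w)] at h1
    exact h1
  have hα1 : α ≤ 1 := by
    have u₀ := Classical.arbitrary V
    have h1 : ∑ w, α * statDist G w ≤ ∑ w, ((lazyMat G) ^ r) u₀ w :=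
      Finset.sum_le_sum fun w _ => hαπ u₀ w
    rw [← Finset.mul_sum, hπ1, mul_one, row_sum_pow_eq_one hQ1 r u₀] at h1
    exact h1
  -- contraction
  have hcontract : ∀ s : ℕ, ∑ u, |((lazyMat G) ^ (s + r)) v u - statDist G u|
      ≤ (1 - α) * ∑ u, |((lazyMat G) ^ s) v u - statDist G u| := by
    intro s
    have hdiff : ∀ u, ((lazyMat G) ^ (s+r)) v u - statDist G u
        = ∑ w, (((lazyMat G) ^ s) v w - statDist G w)
            * (((lazyMat G) ^ r) w u - α * statDist G u) := by
      intro u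
      have h3 : ∑ w, (((lazyMat G) ^ s) v w - statDist G w) * (α * statDist G u) = 0 := by
        rw [← Finset.sum_mul, Finset.sum_sub_distrib, row_sum_pow_eq_one hQ1 s v, hπ1]
        ring
      have h6 : ∑ w, (((lazyMat G) ^ s) v w - statDist G w) * ((lazyMat G) ^ r) w u
          = ((lazyMat G) ^ (s+r)) v u - statDist G u := by
        have e2 : ((lazyMat G) ^ (s+r)) v u
            = ∑ w, ((lazyMat G) ^ s) v w * ((lazyMat G) ^ r) w u := by
          rw [pow_add, Matrix.mul_apply]
        calc ∑ w, (((lazyMat G) ^ s) v w - statDist G w) * ((lazyMat G) ^ r) w u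
            = ∑ w, (((lazyMat G) ^ s) v w * ((lazyMat G) ^ r) w u
                - statDist G w * ((lazyMat G) ^ r) w u) := by
              refine Finset.sum_congr rfl fun w _ => ?_
              ring
          _ = (∑ w, ((lazyMat G) ^ s) v w * ((lazyMat G) ^ r) w u)
              - ∑ w, statDist G w * ((lazyMat G) ^ r) w u := Finset.sum_sub_distrib _ _
          _ = ((lazyMat G) ^ (s+r)) v u - statDist G u := by
              rw [← e2, statDist_stationary_pow hd r u]
      have h5 : ∑ w, (((lazyMat G) ^ s) v w - statDist G w)
            * (((lazyMat G) ^ r) w u - α * statDist G u)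
          = (∑ w, (((lazyMat G) ^ s) v w - statDist G w) * ((lazyMat G) ^ r) w u)
            - ∑ w, (((lazyMat G) ^ s) v w - statDist G w) * (α * statDist G u) := by
        rw [← Finset.sum_sub_distrib]
        refine Finset.sum_congr rfl fun w _ => ?_
        ring
      rw [h5, h3, sub_zero, h6]
    have hS0 : ∀ w u, 0 ≤ ((lazyMat G) ^ r) w u - α * statDist G u := fun w u => by
      have := hαπ w u; linarith
    have hSrow : ∀ w, ∑ u, (((lazyMat G) ^ r) w u - α * statDist G u) ≤ 1 - α := by
      intro w
      rw [Finset.sum_sub_distrib, row_sum_pow_eq_one hQ1 r w]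
      have h7 : ∑ u, α * statDist G u = α := by rw [← Finset.mul_sum, hπ1, mul_one]
      rw [h7]
    calc ∑ u, |((lazyMat G) ^ (s + r)) v u - statDist G u|
        = ∑ u, |∑ w, (((lazyMat G) ^ s) v w - statDist G w)
            * (((lazyMat G) ^ r) w u - α * statDist G u)| :=
          Finset.sum_congr rfl fun u _ => by rw [hdiff u]
      _ ≤ (∑ w, |((lazyMat G) ^ s) v w - statDist G w|) * (1 - α) := l1_smear hS0 hSrow _
      _ = (1 - α) * ∑ u, |((lazyMat G) ^ s) v u - statDist G u| := by ring
  -- iteration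
  have hiter : ∀ k : ℕ, ∑ u, |((lazyMat G) ^ (k * r)) v u - statDist G u|
      ≤ 2 * (1 - α) ^ k := by
    intro k
    induction k with
    | zero =>
      simp only [Nat.zero_mul, pow_zero, mul_one]
      calc ∑ u, |((lazyMat G) ^ 0) v u - statDist G u|
          ≤ ∑ u, (|((lazyMat G) ^ 0) v u| + |statDist G u|) :=
            Finset.sum_le_sum fun u _ => habs _ _
        _ = (∑ u, ((lazyMat G) ^ 0) v u) + ∑ u, statDist G u := by
            rw [Finset.sum_add_distrib]
            congr 1
            · exact Finset.sum_congr rfl fun u _ =>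
                abs_of_nonneg (pow_apply_nonneg hQ0 0 v u)
            · exact Finset.sum_congr rfl fun u _ => abs_of_nonneg (le_of_lt (hπpos u))
        _ = 2 := by rw [row_sum_pow_eq_one hQ1 0 v, hπ1]; norm_num
    | succ k ih =>
      have h1 : (k+1) * r = k * r + r := by ring
      rw [h1]
      calc ∑ u, |((lazyMat G) ^ (k * r + r)) v u - statDist G u|
          ≤ (1 - α) * ∑ u, |((lazyMat G) ^ (k * r)) v u - statDist G u| := hcontract (k * r)
        _ ≤ (1 - α) * (2 * (1 - α) ^ k) := mul_le_mul_of_nonneg_left ih (by linarith)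
        _ = 2 * (1 - α) ^ (k+1) := by ring
  obtain ⟨k, hk⟩ := exists_pow_lt_of_lt_one hε' (by linarith : 1 - α < 1)
  -- conclude
  have hmem : (k * r) ∈ {t : ℕ | dTV (fun u => ((lazyMat G) ^ t) v u) (statDist G) < ε'} := by
    have h1 : (∑ u, |((lazyMat G) ^ (k * r)) v u - statDist G u|) / 2 < ε' := by
      have := hiter k
      nlinarith
    exact h1
  set Sset := {t : ℕ | dTV (fun u => ((lazyMat G) ^ t) v u) (statDist G) < ε'} with hSdef
  have hinf : sInf Sset ∈ Sset := Nat.sInf_mem ⟨k * r, hmem⟩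
  have hinf' : (∑ u, |((lazyMat G) ^ (sInf Sset)) v u - statDist G u|) / 2 < ε' := hinf
  have hle : sInf Sset ≤ tmix G ε' := by
    unfold tmix
    exact Finset.le_sup (f := fun v : V =>
      sInf {t : ℕ | dTV (fun u => ((lazyMat G) ^ t) v u) (statDist G) < ε'})
      (Finset.mem_univ v)
  have hfinal := dmono' (sInf Sset) (tmix G ε') hle
  linarith

end Mixing
set_option maxHeartbeats 2000000

/-- **Claim 3.3.**  For any `δ > 0` there is `c = c(δ) > 0` such that for any
`ε ∈ (0,c)`, any connected simple graph `G` on `n ≥ ε⁻²` vertices with minimal degree at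
least `δn`, any `U ⊆ V` with `|U| ≥ ε√n` and any vertex `v`, the probability that the
simple random walk started at `v` avoids `U` for `2(t_mix(ε/2) + ⌊√n⌋)` steps is at most
`1 - εδ/4`. -/
theorem hit_large_set (δ : ℝ) (hδ : 0 < δ) :
    ∃ c : ℝ, 0 < c ∧
      ∀ (V : Type) [Fintype V] [DecidableEq V] (G : SimpleGraph V), G.Connected →
        ∀ ε : ℝ, ε ∈ Set.Ioo (0 : ℝ) c →
          (ε⁻¹ ^ 2 ≤ (Fintype.card V : ℝ)) →
          (∀ v : V, δ * (Fintype.card V : ℝ) ≤ (deg G v : ℝ)) →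
          ∀ U : Finset V, ε * Real.sqrt (Fintype.card V) ≤ (U.card : ℝ) →
          ∀ v : V,
            avoidProb G U v (2 * (tmix G (ε / 2) + Nat.sqrt (Fintype.card V))) ≤
              1 - ε * δ / 4 := by
  refine ⟨min (δ^2 / 48) (min (δ / 4) 2⁻¹), by positivity, ?_⟩
  intro V _instF _instD G hconn ε hε hn hdeg U hU v
  obtain ⟨hε0, hεc⟩ := hε
  have hε48 : ε ≤ δ^2 / 48 := le_of_lt (lt_of_lt_of_le hεc (min_le_left _ _))
  have hεδ4 : ε ≤ δ / 4 :=
    le_of_lt (lt_of_lt_of_le hεc (le_trans (min_le_right _ _) (min_le_left _ _)))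
  have hεhalf : ε ≤ 2⁻¹ :=
    le_of_lt (lt_of_lt_of_le hεc (le_trans (min_le_right _ _) (min_le_right _ _)))
  have h2ε : (2:ℝ) ≤ ε⁻¹ := by
    calc (2:ℝ) = (2⁻¹)⁻¹ := by norm_num
      _ ≤ ε⁻¹ := inv_anti₀ hε0 hεhalf
  have hn4 : (4:ℝ) ≤ (Fintype.card V : ℝ) := le_trans (by nlinarith) hn
  have hn2 : 2 ≤ Fintype.card V := by
    have : (4:ℕ) ≤ Fintype.card V := by exact_mod_cast hn4
    omega
  have hNV : Nonempty V := Fintype.card_pos_iff.mp (by omega)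
  have hn0 : (0:ℝ) < (Fintype.card V : ℝ) := by linarith
  -- degrees
  have hd : ∀ w, 0 < deg G w := by
    intro w
    have h1 : (0:ℝ) < δ * (Fintype.card V : ℝ) := by positivity
    have h2 : (0:ℝ) < (deg G w : ℝ) := lt_of_lt_of_le h1 (hdeg w)
    exact_mod_cast h2
  have hdegn : ∀ w, (deg G w : ℝ) ≤ (Fintype.card V : ℝ) := by
    intro w; exact_mod_cast deg_le_card G w
  have hδ1 : δ < 1 := by
    have hdeglt : (deg G v : ℝ) < (Fintype.card V : ℝ) := by
      have h1 : (Finset.univ.filter (fun u => G.Adj v u)) ⊆ Finset.univ.erase v := by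
        intro x hx
        rw [Finset.mem_filter] at hx
        rw [Finset.mem_erase]
        exact ⟨fun h => G.irrefl (h ▸ hx.2), Finset.mem_univ x⟩
      have h2 : deg G v ≤ Fintype.card V - 1 := by
        rw [deg_eq_card]
        calc (Finset.univ.filter (fun u => G.Adj v u)).card
            ≤ (Finset.univ.erase v).card := Finset.card_le_card h1
          _ = Fintype.card V - 1 := by
              rw [Finset.card_erase_of_mem (Finset.mem_univ v), Finset.card_univ]
      have h3 : (deg G v : ℝ) ≤ (Fintype.card V : ℝ) - 1 := by
        have := h2
        have h4 : (deg G v : ℝ) ≤ ((Fintype.card V - 1 : ℕ) : ℝ) := by exact_mod_cast this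
        have h5 : ((Fintype.card V - 1 : ℕ) : ℝ) = (Fintype.card V : ℝ) - 1 := by
          have : 1 ≤ Fintype.card V := by omega
          push_cast [this]
          ring
        linarith [h4, le_of_eq h5]
      linarith
    nlinarith [hdeg v]
  -- square roots
  set sn := Real.sqrt (Fintype.card V : ℝ) with hsndef
  have hsn0 : 0 < sn := Real.sqrt_pos.mpr hn0
  have hsnsq : sn * sn = (Fintype.card V : ℝ) := Real.mul_self_sqrt (le_of_lt hn0)
  have hsninv : ε⁻¹ ≤ sn := by
    rw [hsndef]
    rw [show (ε⁻¹ : ℝ) = Real.sqrt (ε⁻¹^2) by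
      rw [Real.sqrt_sq (by positivity)]]
    exact Real.sqrt_le_sqrt hn
  have hεsn : 1 ≤ ε * sn := by
    calc (1:ℝ) = ε * ε⁻¹ := by rw [mul_inv_cancel₀ (ne_of_gt hε0)]
      _ ≤ ε * sn := mul_le_mul_of_nonneg_left hsninv (le_of_lt hε0)
  have hsn2 : 2 ≤ sn := le_trans h2ε hsninv
  set m := Nat.sqrt (Fintype.card V) with hmdef
  have hm1 : 1 ≤ m := by
    rw [hmdef]
    have := Nat.sqrt_pos.mpr (show 0 < Fintype.card V by omega)
    omega
  have hmsn : (m:ℝ) ≤ sn := by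
    have h1 : m ^ 2 ≤ Fintype.card V := Nat.sqrt_le' (Fintype.card V)
    have h2 : ((m:ℝ)) * (m:ℝ) ≤ (Fintype.card V : ℝ) := by
      have h3 : ((m:ℝ))^2 ≤ (Fintype.card V : ℝ) := by exact_mod_cast h1
      nlinarith [h3]
    nlinarith [Nat.cast_nonneg (α := ℝ) m, hsn0, hsnsq]
  have hsnm1 : sn ≤ (m:ℝ) + 1 := by
    have h1 : Fintype.card V < (m+1) ^ 2 := Nat.lt_succ_sqrt' (Fintype.card V)
    have h2 : (Fintype.card V : ℝ) < ((m:ℝ)+1) * ((m:ℝ)+1) := by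
      have h3 : (Fintype.card V : ℝ) < (((m:ℕ):ℝ)+1)^2 := by exact_mod_cast h1
      nlinarith [h3]
    nlinarith [Nat.cast_nonneg (α := ℝ) m, hsn0, hsnsq]
  -- the subset W
  set k := ⌈ε * sn⌉₊ with hkdef
  have hk1 : 1 ≤ k := by
    rw [hkdef]
    exact Nat.one_le_ceil_iff.mpr (by positivity)
  have hkU : k ≤ U.card := by
    rw [hkdef]
    exact Nat.ceil_le.mpr (by exact_mod_cast hU)
  have hkε : ε * sn ≤ (k:ℝ) := Nat.le_ceil _
  have hk2 : (k:ℝ) ≤ 2 * (ε * sn) := by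
    have h1 : (k:ℝ) < ε * sn + 1 := Nat.ceil_lt_add_one (by positivity)
    linarith
  obtain ⟨W, hWU, hWcard⟩ := Finset.exists_subset_card_eq hkU
  -- probability matrices
  have hP0 := transMat_nonneg G
  have hP1 : ∀ i, ∑ j, transMat G i j = 1 := fun i => transMat_row_sum G i (hd i)
  have hQ0 := lazyMat_nonneg G
  have hQ1 : ∀ i, ∑ j, lazyMat G i j = 1 := fun i => lazyMat_row_sum G i (hd i)
  have hπ0 := statDist_nonneg G
  have hπ1 : ∑ w, statDist G w = 1 := statDist_sum G hd
  have hdn0 : (0:ℝ) < δ * (Fintype.card V : ℝ) := by positivity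
  have hPc : ∀ i j, transMat G i j ≤ (δ * (Fintype.card V : ℝ))⁻¹ :=
    fun i j => transMat_le G i j hdn0 (hdeg i)
  -- case v ∈ U
  by_cases hv : v ∈ U
  · rw [avoidProb, if_pos hv]
    have h1 : ε * δ ≤ (δ/4) * δ := mul_le_mul_of_nonneg_right hεδ4 (le_of_lt hδ)
    have h2 : (δ/4) * δ < 1 := by nlinarith
    linarith
  -- main case
  have hvW : v ∉ W := fun h => hv (hWU h)
  rw [avoidProb, if_neg hv]
  set t := tmix G (ε/2) with htdef
  set T := 2 * (t + m) with hTdef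
  -- A1 : reduce to W
  have hA1 : ∑ u, ((killedMat G U) ^ T) v u ≤ ∑ u, ((killed (transMat G) W) ^ T) v u := by
    rw [killedMat_eq]
    refine Finset.sum_le_sum fun u _ => ?_
    exact pow_apply_le_pow (killed_nonneg hP0) (killed_mono hP0 hWU) T v u
  -- A2 : lazy walk comparison
  have hA2 : ∑ u, ((killed (transMat G) W) ^ T) v u
      ≤ ∑ u, ((killed (lazyMat G) W) ^ (t + m)) v u := by
    refine lazy_killed_ge hP0 hP1 (fun a b => lazyMat_apply G a b) (t+m) T ?_ v hvW
    omega
  -- A3 : split off the mixing segment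
  have haq0 : ∀ w, 0 ≤ ∑ u, ((killed (lazyMat G) W) ^ m) w u := fun w =>
    Finset.sum_nonneg fun u _ => pow_apply_nonneg (killed_nonneg hQ0) m w u
  have haq1 : ∀ w, ∑ u, ((killed (lazyMat G) W) ^ m) w u ≤ 1 := fun w =>
    row_sum_pow_le_one (killed_nonneg hQ0) (killed_row_sum_le_one hQ0 hQ1) m w
  have hA3 : ∑ u, ((killed (lazyMat G) W) ^ (t + m)) v u
      ≤ ∑ w, ((lazyMat G) ^ t) v w * ∑ u, ((killed (lazyMat G) W) ^ m) w u := by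
    have hexp : ∑ u, ((killed (lazyMat G) W) ^ (t + m)) v u
        = ∑ w, ((killed (lazyMat G) W) ^ t) v w
            * ∑ u, ((killed (lazyMat G) W) ^ m) w u := by
      simp only [pow_add, Matrix.mul_apply]
      rw [Finset.sum_comm]
      refine Finset.sum_congr rfl fun w _ => ?_
      rw [Finset.mul_sum]
    rw [hexp]
    refine Finset.sum_le_sum fun w _ => ?_
    refine mul_le_mul_of_nonneg_right ?_ (haq0 w)
    exact pow_apply_le_pow (killed_nonneg hQ0) (killed_le hQ0) t v w
  -- A4 : rewrite with hitting function
  have hA4 : ∑ w, ((lazyMat G) ^ t) v w * ∑ u, ((killed (lazyMat G) W) ^ m) w u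
      = 1 - ∑ w, ((lazyMat G) ^ t) v w * (1 - ∑ u, ((killed (lazyMat G) W) ^ m) w u) := by
    have h1 : ∑ w, ((lazyMat G) ^ t) v w * (1 - ∑ u, ((killed (lazyMat G) W) ^ m) w u)
        = (∑ w, ((lazyMat G) ^ t) v w)
          - ∑ w, ((lazyMat G) ^ t) v w * ∑ u, ((killed (lazyMat G) W) ^ m) w u := by
      rw [← Finset.sum_sub_distrib]
      refine Finset.sum_congr rfl fun w _ => ?_
      ring
    rw [h1, row_sum_pow_eq_one hQ1 t v]
    ring
  -- the key lower bound on the hit mass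
  suffices hkey : ε * δ / 4 ≤ ∑ w, ((lazyMat G) ^ t) v w
      * (1 - ∑ u, ((killed (lazyMat G) W) ^ m) w u) by
    have hgoal : ∑ u, ((killedMat G U) ^ T) v u ≤ 1 - ε * δ / 4 := by
      calc ∑ u, ((killedMat G U) ^ T) v u
          ≤ ∑ w, ((lazyMat G) ^ t) v w * ∑ u, ((killed (lazyMat G) W) ^ m) w u :=
            le_trans hA1 (le_trans hA2 hA3)
        _ = 1 - ∑ w, ((lazyMat G) ^ t) v w
              * (1 - ∑ u, ((killed (lazyMat G) W) ^ m) w u) := hA4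
        _ ≤ 1 - ε * δ / 4 := by linarith
    convert hgoal using 1
    congr!
  -- abbreviations
  clear hA1 hA2 hA3 hA4
  -- mixing estimate
  have hmix : ∑ w, |((lazyMat G) ^ t) v w - statDist G w| < ε := by
    have h1 := tmix_bound (G := G) hconn hd (by positivity : (0:ℝ) < ε/2) v
    rw [← htdef] at h1
    linarith
  -- escape bound
  have hstepW : ∀ w ∉ W, ∑ x ∈ W, lazyMat G w x
      ≤ (k:ℝ) * (δ * (Fintype.card V : ℝ))⁻¹ := by
    intro w hw
    have h1 : ∀ x ∈ W, lazyMat G w x ≤ (δ * (Fintype.card V:ℝ))⁻¹ := by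
      intro x hx
      have hxw : w ≠ x := fun h => hw (h ▸ hx)
      rw [lazyMat_apply, if_neg hxw]
      have h2 := hPc w x
      have h3 := hP0 w x
      have h4 : (0:ℝ) < (δ * (Fintype.card V:ℝ))⁻¹ := by positivity
      nlinarith
    calc ∑ x ∈ W, lazyMat G w x ≤ ∑ x ∈ W, (δ * (Fintype.card V:ℝ))⁻¹ :=
          Finset.sum_le_sum h1
      _ = (k:ℝ) * (δ * (Fintype.card V:ℝ))⁻¹ := by
          rw [Finset.sum_const, hWcard, nsmul_eq_mul]
  have hesc : ∀ w ∉ W, 1 - ∑ u, ((killed (lazyMat G) W) ^ m) w u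
      ≤ (m:ℝ) * ((k:ℝ) * (δ * (Fintype.card V : ℝ))⁻¹) :=
    escape_bound hQ0 hQ1 (by positivity) hstepW m
  -- bound on the window sums
  have hBbound : ∀ x ∈ W, ∑ d ∈ Finset.range (m+1), ∑ y ∈ W, ((lazyMat G) ^ d) x y
      ≤ 2 + ((m:ℝ)+1) * ((k:ℝ) * (δ * (Fintype.card V : ℝ))⁻¹) := by
    intro x hx
    have hqp := qpow_bound (c := (δ * (Fintype.card V : ℝ))⁻¹) (by positivity)
      hP0 hPc hQ0 hQ1 (fun a b => lazyMat_apply G a b)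
    have hinner : ∀ d, ∑ y ∈ W, ((lazyMat G) ^ d) x y
        ≤ (2⁻¹:ℝ)^d + (k:ℝ) * (δ * (Fintype.card V : ℝ))⁻¹ := by
      intro d
      calc ∑ y ∈ W, ((lazyMat G) ^ d) x y
          ≤ ∑ y ∈ W, ((if x = y then ((2⁻¹:ℝ))^d else 0)
              + (δ * (Fintype.card V : ℝ))⁻¹) := by
            refine Finset.sum_le_sum fun y _ => ?_
            have h5 := hqp d x y
            by_cases hxy : x = y
            · rw [if_pos hxy]; rw [if_pos hxy] at h5; linarith
            · rw [if_neg hxy]; rw [if_neg hxy] at h5; linarith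
        _ = (∑ y ∈ W, if x = y then ((2⁻¹:ℝ))^d else 0)
            + (k:ℝ) * (δ * (Fintype.card V : ℝ))⁻¹ := by
            rw [Finset.sum_add_distrib, Finset.sum_const, hWcard, nsmul_eq_mul]
        _ ≤ (2⁻¹:ℝ)^d + (k:ℝ) * (δ * (Fintype.card V : ℝ))⁻¹ := by
            have h5 : ∑ y ∈ W, (if x = y then ((2⁻¹:ℝ))^d else 0)
                = if x ∈ W then (2⁻¹:ℝ)^d else 0 :=
              Finset.sum_ite_eq W x (fun _ => (2⁻¹:ℝ)^d)
            rw [h5, if_pos hx]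
    calc ∑ d ∈ Finset.range (m+1), ∑ y ∈ W, ((lazyMat G) ^ d) x y
        ≤ ∑ d ∈ Finset.range (m+1),
            ((2⁻¹:ℝ)^d + (k:ℝ) * (δ * (Fintype.card V : ℝ))⁻¹) :=
          Finset.sum_le_sum fun d _ => hinner d
      _ = (∑ d ∈ Finset.range (m+1), (2⁻¹:ℝ)^d)
          + ((m:ℝ)+1) * ((k:ℝ) * (δ * (Fintype.card V : ℝ))⁻¹) := by
          rw [Finset.sum_add_distrib, Finset.sum_const, Finset.card_range, nsmul_eq_mul]
          push_cast; ring
      _ ≤ 2 + ((m:ℝ)+1) * ((k:ℝ) * (δ * (Fintype.card V : ℝ))⁻¹) := by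
          have hgeo : ∑ d ∈ Finset.range (m+1), (2⁻¹:ℝ)^d ≤ 2 := by
            have h6 := geom_sum_eq (by norm_num : (2⁻¹:ℝ) ≠ 1) (m+1)
            have h7 : (0:ℝ) ≤ (2⁻¹:ℝ)^(m+1) := by positivity
            rw [h6]
            have h8 : ((2⁻¹:ℝ)^(m+1) - 1)/((2⁻¹:ℝ) - 1) = 2*(1 - (2⁻¹:ℝ)^(m+1)) := by
              norm_num
              ring
            rw [h8]; nlinarith
          linarith
  -- expected hitting mass from stationarity
  have hEH := expected_hit_lower (W := W) (pi := statDist G) hm1 hQ0 hQ1 hπ0 hπ1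
    (statDist_stationary G hd) hBbound
  -- stationary distribution bounds
  have hSpos : (0:ℝ) < ∑ u, (deg G u : ℝ) := sum_deg_pos G hd
  have hSle : ∑ u, (deg G u : ℝ) ≤ (Fintype.card V:ℝ) * (Fintype.card V:ℝ) := by
    calc ∑ u, (deg G u : ℝ) ≤ ∑ _u : V, (Fintype.card V:ℝ) :=
          Finset.sum_le_sum fun u _ => hdegn u
      _ = (Fintype.card V:ℝ) * (Fintype.card V:ℝ) := by
          rw [Finset.sum_const, Finset.card_univ, nsmul_eq_mul]
  have hSge : δ * ((Fintype.card V:ℝ) * (Fintype.card V:ℝ)) ≤ ∑ u, (deg G u : ℝ) := by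
    calc δ * ((Fintype.card V:ℝ) * (Fintype.card V:ℝ))
        = ∑ _u : V, δ * (Fintype.card V:ℝ) := by
          rw [Finset.sum_const, Finset.card_univ, nsmul_eq_mul]; ring
      _ ≤ ∑ u, (deg G u : ℝ) := Finset.sum_le_sum fun u _ => hdeg u
  have hπlow : ∀ w, δ / (Fintype.card V:ℝ) ≤ statDist G w := by
    intro w
    unfold statDist
    have h1 : δ / (Fintype.card V:ℝ)
        = (δ * (Fintype.card V:ℝ)) / ((Fintype.card V:ℝ) * (Fintype.card V:ℝ)) := by
      field_simp
    rw [h1]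
    exact div_le_div₀ (Nat.cast_nonneg _) (hdeg w) hSpos hSle
  have hπhigh : ∀ w, statDist G w ≤ 1 / (δ * (Fintype.card V:ℝ)) := by
    intro w
    unfold statDist
    have h1 : 1 / (δ * (Fintype.card V:ℝ))
        = (Fintype.card V:ℝ) / (δ * ((Fintype.card V:ℝ) * (Fintype.card V:ℝ))) := by
      field_simp
    rw [h1]
    exact div_le_div₀ (Nat.cast_nonneg _) (hdegn w) (by positivity) hSge
  have hπW_low : (k:ℝ) * (δ / (Fintype.card V:ℝ)) ≤ ∑ x ∈ W, statDist G x := by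
    calc (k:ℝ) * (δ / (Fintype.card V:ℝ)) = ∑ _x ∈ W, δ / (Fintype.card V:ℝ) := by
          rw [Finset.sum_const, hWcard, nsmul_eq_mul]
      _ ≤ ∑ x ∈ W, statDist G x := Finset.sum_le_sum fun x _ => hπlow x
  have hπW_high : ∑ x ∈ W, statDist G x ≤ (k:ℝ) * (1 / (δ * (Fintype.card V:ℝ))) := by
    calc ∑ x ∈ W, statDist G x ≤ ∑ _x ∈ W, 1 / (δ * (Fintype.card V:ℝ)) :=
          Finset.sum_le_sum fun x _ => hπhigh x
      _ = (k:ℝ) * (1 / (δ * (Fintype.card V:ℝ))) := by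
          rw [Finset.sum_const, hWcard, nsmul_eq_mul]
  -- numeric bounds
  have hmq : (m:ℝ) * ((k:ℝ) * (δ * (Fintype.card V:ℝ))⁻¹) ≤ 2*ε/δ := by
    have h1 : (m:ℝ)*(k:ℝ) ≤ sn * (2*(ε*sn)) :=
      mul_le_mul hmsn hk2 (Nat.cast_nonneg k) (le_of_lt hsn0)
    have h2 : sn * (2*(ε*sn)) = 2*ε*(Fintype.card V:ℝ) := by rw [← hsnsq]; ring
    have hinv : (0:ℝ) ≤ (δ * (Fintype.card V:ℝ))⁻¹ := by positivity
    calc (m:ℝ) * ((k:ℝ) * (δ * (Fintype.card V:ℝ))⁻¹)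
        = ((m:ℝ)*(k:ℝ)) * (δ * (Fintype.card V:ℝ))⁻¹ := by ring
      _ ≤ (2*ε*(Fintype.card V:ℝ)) * (δ * (Fintype.card V:ℝ))⁻¹ :=
          mul_le_mul_of_nonneg_right (by linarith) hinv
      _ = 2*ε/δ := by field_simp
  have hm1q : ((m:ℝ)+1) * ((k:ℝ) * (δ * (Fintype.card V:ℝ))⁻¹) ≤ 4*ε/δ := by
    have h0 : (m:ℝ)+1 ≤ 2*sn := by linarith
    have h1 : ((m:ℝ)+1)*(k:ℝ) ≤ (2*sn) * (2*(ε*sn)) :=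
      mul_le_mul h0 hk2 (Nat.cast_nonneg k) (by linarith)
    have h2 : (2*sn) * (2*(ε*sn)) = 4*ε*(Fintype.card V:ℝ) := by rw [← hsnsq]; ring
    have hinv : (0:ℝ) ≤ (δ * (Fintype.card V:ℝ))⁻¹ := by positivity
    calc ((m:ℝ)+1) * ((k:ℝ) * (δ * (Fintype.card V:ℝ))⁻¹)
        = (((m:ℝ)+1)*(k:ℝ)) * (δ * (Fintype.card V:ℝ))⁻¹ := by ring
      _ ≤ (4*ε*(Fintype.card V:ℝ)) * (δ * (Fintype.card V:ℝ))⁻¹ :=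
          mul_le_mul_of_nonneg_right (by linarith) hinv
      _ = 4*ε/δ := by field_simp
  have hB3 : 2 + ((m:ℝ)+1) * ((k:ℝ) * (δ * (Fintype.card V:ℝ))⁻¹) ≤ 3 := by
    have h1 : 4*ε/δ ≤ 1 := (div_le_one hδ).mpr (by linarith)
    linarith
  have hE0 : 0 ≤ ∑ w, statDist G w * (1 - ∑ u, ((killed (lazyMat G) W) ^ m) w u) := by
    refine Finset.sum_nonneg fun w _ => mul_nonneg (hπ0 w) ?_
    linarith [haq1 w]
  have hE3 : ε * δ / 3 ≤ ∑ w, statDist G w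
      * (1 - ∑ u, ((killed (lazyMat G) W) ^ m) w u) := by
    have hlow : ε * δ ≤ ((m:ℝ)+1) * (∑ x ∈ W, statDist G x) := by
      have h1 : ε * sn * (δ/(Fintype.card V:ℝ)) ≤ (k:ℝ) * (δ/(Fintype.card V:ℝ)) :=
        mul_le_mul_of_nonneg_right hkε (by positivity)
      have h2 : sn * (ε * sn * (δ/(Fintype.card V:ℝ)))
          ≤ ((m:ℝ)+1) * (∑ x ∈ W, statDist G x) := by
        refine mul_le_mul hsnm1 (by linarith) (by positivity) (by positivity)
      have h3 : sn * (ε * sn * (δ/(Fintype.card V:ℝ))) = ε * δ := by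
        rw [← hsnsq]
        field_simp
      linarith
    have h4 : (2 + ((m:ℝ)+1) * ((k:ℝ) * (δ * (Fintype.card V:ℝ))⁻¹))
          * (∑ w, statDist G w * (1 - ∑ u, ((killed (lazyMat G) W) ^ m) w u))
        ≤ 3 * (∑ w, statDist G w * (1 - ∑ u, ((killed (lazyMat G) W) ^ m) w u)) :=
      mul_le_mul_of_nonneg_right hB3 hE0
    linarith
  -- transfer from the stationary start to the actual start
  have hfW : Finset.univ.filter (fun x => x ∈ W) = W := by ext x; simp
  have habs : ∀ w, statDist G w - ((lazyMat G) ^ t) v w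
      ≤ |((lazyMat G) ^ t) v w - statDist G w| := by
    intro w
    rw [abs_sub_comm]
    exact le_abs_self _
  have hsplitE := Finset.sum_filter_add_sum_filter_not Finset.univ (fun x => x ∈ W)
    (fun w => statDist G w * (1 - ∑ u, ((killed (lazyMat G) W) ^ m) w u))
  have hsplitM := Finset.sum_filter_add_sum_filter_not Finset.univ (fun x => x ∈ W)
    (fun w => ((lazyMat G) ^ t) v w * (1 - ∑ u, ((killed (lazyMat G) W) ^ m) w u))
  have hWpart : ∑ w ∈ Finset.univ.filter (fun x => x ∈ W),
      statDist G w * (1 - ∑ u, ((killed (lazyMat G) W) ^ m) w u)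
        ≤ ∑ x ∈ W, statDist G x := by
    rw [hfW]
    refine Finset.sum_le_sum fun w _ => ?_
    have h1 := haq0 w
    have h2 := hπ0 w
    nlinarith
  have hMW0 : 0 ≤ ∑ w ∈ Finset.univ.filter (fun x => x ∈ W),
      ((lazyMat G) ^ t) v w * (1 - ∑ u, ((killed (lazyMat G) W) ^ m) w u) := by
    refine Finset.sum_nonneg fun w _ => ?_
    refine mul_nonneg (pow_apply_nonneg hQ0 t v w) ?_
    linarith [haq1 w]
  have hmain : ∑ w ∈ Finset.univ.filter (fun x => x ∉ W),
        statDist G w * (1 - ∑ u, ((killed (lazyMat G) W) ^ m) w u)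
      - (2*ε/δ) * ε
      ≤ ∑ w ∈ Finset.univ.filter (fun x => x ∉ W),
        ((lazyMat G) ^ t) v w * (1 - ∑ u, ((killed (lazyMat G) W) ^ m) w u) := by
    have hptwise : ∀ w ∈ Finset.univ.filter (fun x => x ∉ W),
        statDist G w * (1 - ∑ u, ((killed (lazyMat G) W) ^ m) w u)
          - |((lazyMat G) ^ t) v w - statDist G w| * (2*ε/δ)
        ≤ ((lazyMat G) ^ t) v w * (1 - ∑ u, ((killed (lazyMat G) W) ^ m) w u) := by
      intro w hw
      rw [Finset.mem_filter] at hw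
      have h1 : 1 - ∑ u, ((killed (lazyMat G) W) ^ m) w u
          ≤ (m:ℝ) * ((k:ℝ) * (δ * (Fintype.card V:ℝ))⁻¹) := hesc w hw.2
      have h2 : 0 ≤ 1 - ∑ u, ((killed (lazyMat G) W) ^ m) w u := by linarith [haq1 w]
      have h3 := habs w
      have h4 : (statDist G w - ((lazyMat G) ^ t) v w)
            * (1 - ∑ u, ((killed (lazyMat G) W) ^ m) w u)
          ≤ |((lazyMat G) ^ t) v w - statDist G w| * (2*ε/δ) := by
        by_cases h5 : 0 ≤ statDist G w - ((lazyMat G) ^ t) v w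
        · calc (statDist G w - ((lazyMat G) ^ t) v w)
                * (1 - ∑ u, ((killed (lazyMat G) W) ^ m) w u)
              ≤ (statDist G w - ((lazyMat G) ^ t) v w)
                * ((m:ℝ) * ((k:ℝ) * (δ * (Fintype.card V:ℝ))⁻¹)) :=
                mul_le_mul_of_nonneg_left h1 h5
            _ ≤ |((lazyMat G) ^ t) v w - statDist G w| * (2*ε/δ) := by
                have h6 : 0 ≤ (m:ℝ) * ((k:ℝ) * (δ * (Fintype.card V:ℝ))⁻¹) := by positivity
                have h7 : 0 ≤ |((lazyMat G) ^ t) v w - statDist G w| := abs_nonneg _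
                exact mul_le_mul h3 hmq h6 h7
        · push_neg at h5
          have h6 : 0 ≤ |((lazyMat G) ^ t) v w - statDist G w| * (2*ε/δ) := by positivity
          nlinarith
      nlinarith
    have hsum := Finset.sum_le_sum hptwise
    rw [Finset.sum_sub_distrib] at hsum
    have htv : ∑ w ∈ Finset.univ.filter (fun x => x ∉ W),
        |((lazyMat G) ^ t) v w - statDist G w| * (2*ε/δ) ≤ (2*ε/δ) * ε := by
      have h1 : ∑ w ∈ Finset.univ.filter (fun x => x ∉ W),
          |((lazyMat G) ^ t) v w - statDist G w|
            ≤ ∑ w, |((lazyMat G) ^ t) v w - statDist G w| := by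
        refine Finset.sum_le_sum_of_subset_of_nonneg (Finset.filter_subset _ _) ?_
        intro w _ _
        exact abs_nonneg _
      have h2 : 0 ≤ 2*ε/δ := by positivity
      calc ∑ w ∈ Finset.univ.filter (fun x => x ∉ W),
            |((lazyMat G) ^ t) v w - statDist G w| * (2*ε/δ)
          = (∑ w ∈ Finset.univ.filter (fun x => x ∉ W),
              |((lazyMat G) ^ t) v w - statDist G w|) * (2*ε/δ) := by
            rw [Finset.sum_mul]
        _ ≤ ε * (2*ε/δ) := by
            refine mul_le_mul_of_nonneg_right ?_ h2
            linarith [hmix]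
        _ = (2*ε/δ) * ε := by ring
    linarith
  -- collect
  have hπW2 : ∑ x ∈ W, statDist G x ≤ 2*ε*ε/δ := by
    have h1 : (k:ℝ) * (1 / (δ * (Fintype.card V:ℝ)))
        ≤ (2*(ε*sn)) * (1 / (δ * (Fintype.card V:ℝ))) :=
      mul_le_mul_of_nonneg_right hk2 (by positivity)
    have hsnε : sn⁻¹ ≤ ε := by
      have h2 : (0:ℝ) < ε⁻¹ := by positivity
      calc sn⁻¹ ≤ (ε⁻¹)⁻¹ := inv_anti₀ h2 hsninv
        _ = ε := inv_inv ε
    have h3 : (2*(ε*sn)) * (1 / (δ * (Fintype.card V:ℝ))) = (2*ε/δ) * sn⁻¹ := by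
      rw [← hsnsq]
      field_simp
    have h4 : (2*ε/δ) * sn⁻¹ ≤ (2*ε/δ) * ε :=
      mul_le_mul_of_nonneg_left hsnε (by positivity)
    have h5 : (2*ε/δ) * ε = 2*ε*ε/δ := by ring
    linarith
  have hfrac : (2*ε/δ) * ε + 2*ε*ε/δ ≤ ε*δ/3 - ε*δ/4 := by
    have h1 : 48 * ε ≤ δ^2 := by linarith
    have h2 : (2*ε/δ)*ε + 2*ε*ε/δ = 4*ε*ε/δ := by ring
    have h3 : 4*ε*ε/δ ≤ ε*δ/12 := by
      rw [div_le_div_iff₀ hδ (by norm_num : (0:ℝ) < 12)]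
      nlinarith
    have h4 : ε*δ/3 - ε*δ/4 = ε*δ/12 := by ring
    linarith
  -- finish
  linarith [hsplitE, hsplitM, hWpart, hMW0, hmain, hE3, hπW2, hfrac]

end Paper
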